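/- Let x(t) = ∑_{p=0}^{P−1} φ_p(t)·exp(−i ω_p t) be a multiband signal with P ≥ 1 distinct frequencies Ω_C = {ω_0, …, ω_{P−1}} and baseband bandwidth parameter Ω_B > 0, and let x[k] = x(k·T_S). If the sampling period satisfies T_S < 1/(2^P·Ω_B·e) (in particular T_S ≤ 1/(2·Ω_B·e)), then the filtered amplitudes shrink to zero with the filter order: sup_{k ∈ ℤ} |(Ψ_{Ω_C}^N ∗ x[·])[k]| → 0 as N → ∞. (The decay remark following Lemma 1.) -/

import Mathlib

open scoped Pointwise FourierTransform
open MeasureTheory Complex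


noncomputable section

open scoped BigOperators

/-- Kronecker delta sequence. -/
def delta : ℤ → ℂ := fun k => if k = 0 then 1 else 0

/-- Discrete convolution of sequences: `(a ∗ b)[k] = ∑ₙ a[n]·b[k−n]`. -/
def conv (a b : ℤ → ℂ) : ℤ → ℂ := fun k => ∑' n : ℤ, a n * b (k - n)

/-- `N`-fold convolution power (`convPow a 0` is the unit `delta`). -/
def convPow (a : ℤ → ℂ) : ℕ → ℤ → ℂ
  | 0 => delta
  | n + 1 => conv a (convPow a n)

/-- Two-tap modulated filter `ψ = [-1, exp(-i ω T)]`. -/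
def psi (w T : ℝ) : ℤ → ℂ := fun k =>
  if k = 0 then -1 else if k = 1 then Complex.exp (-(Complex.I * (w : ℂ) * (T : ℂ))) else 0

/-- Multiband filter `Ψ = ψ₀ ∗ ψ₁ ∗ ⋯` over a list of frequencies. -/
def PsiL (ws : List ℝ) (T : ℝ) : ℤ → ℂ :=
  (ws.map fun w => psi w T).foldr conv delta

/-- First difference filter `Δ = [-1, 1]`. -/
def Delta : ℤ → ℂ := fun k => if k = 0 then -1 else if k = 1 then 1 else 0

/-- Fourier transform in angular frequency: `f̂(ω) = ∫ exp(-i ω t) f(t) dt`. -/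
def angFourier (f : ℝ → ℂ) (w : ℝ) : ℂ :=
  ∫ t : ℝ, Complex.exp (-(Complex.I * (w : ℂ) * (t : ℂ))) * f t

/-- Centered modulo `M_λ : ℝ → [-λ, λ)`. -/
def mod1 (lam t : ℝ) : ℝ := t - 2 * lam * (⌊(t + lam) / (2 * lam)⌋ : ℝ)

/-- Centered modulo on ℂ, applied componentwise. -/
def cmod (lam : ℝ) (z : ℂ) : ℂ := (mod1 lam z.re : ℂ) + (mod1 lam z.im : ℂ) * Complex.I

/-- Elementary symmetric polynomial of degree `k` in variables `z 0, …, z (P-1)`. -/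
def esymmC {P : ℕ} (z : Fin P → ℂ) (k : ℕ) : ℂ :=
  ∑ S ∈ Finset.univ.powersetCard k, ∏ i ∈ S, z i


/-- finite support predicate -/
def FinSupp (a : ℤ → ℂ) : Prop := ∃ s : Finset ℤ, ∀ n ∉ s, a n = 0

lemma conv_eq_sum {a : ℤ → ℂ} {s : Finset ℤ} (ha : ∀ n ∉ s, a n = 0) (f : ℤ → ℂ) (k : ℤ) :
    conv a f k = ∑ n ∈ s, a n * f (k - n) :=
  tsum_eq_sum (fun n hn => by rw [ha n hn, zero_mul])

lemma finSupp_delta : FinSupp delta :=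
  ⟨{0}, fun n hn => by simp [delta]; exact fun h => hn (by simp [h])⟩

lemma finSupp_psi (w T : ℝ) : FinSupp (psi w T) := by
  refine ⟨{0, 1}, fun n hn => ?_⟩
  simp only [Finset.mem_insert, Finset.mem_singleton, not_or] at hn
  simp [psi, hn.1, hn.2]

lemma conv_delta (f : ℤ → ℂ) : conv delta f = f := by
  funext k
  rw [conv_eq_sum (s := {0}) (fun n hn => by simp [delta]; exact fun h => hn (by simp [h]))]
  simp [delta]

lemma conv_psi_apply (w T : ℝ) (f : ℤ → ℂ) (k : ℤ) :
    conv (psi w T) f k = Complex.exp (-(Complex.I * w * T)) * f (k - 1) - f k := by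
  rw [conv_eq_sum (s := {0, 1}) (fun n hn => by
    simp only [Finset.mem_insert, Finset.mem_singleton, not_or] at hn
    simp [psi, hn.1, hn.2])]
  rw [Finset.sum_insert (by norm_num), Finset.sum_singleton]
  simp [psi]
  ring

lemma finSupp_conv {a b : ℤ → ℂ} (ha : FinSupp a) (hb : FinSupp b) : FinSupp (conv a b) := by
  obtain ⟨s, hs⟩ := ha; obtain ⟨t, ht⟩ := hb
  refine ⟨s + t, fun n hn => ?_⟩
  rw [conv_eq_sum hs]
  refine Finset.sum_eq_zero fun m hm => ?_
  have hnm : n - m ∉ t := fun h => hn (by simpa using Finset.add_mem_add hm h)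
  rw [ht _ hnm, mul_zero]

lemma conv_assoc {a b : ℤ → ℂ} (ha : FinSupp a) (hb : FinSupp b) (f : ℤ → ℂ) :
    conv (conv a b) f = conv a (conv b f) := by
  obtain ⟨s, hs⟩ := ha; obtain ⟨t, ht⟩ := hb
  have hab : ∀ n ∉ s + t, conv a b n = 0 := fun n hn => by
    rw [conv_eq_sum hs]
    refine Finset.sum_eq_zero fun m hm => ?_
    have hnm : n - m ∉ t := fun h => hn (by simpa using Finset.add_mem_add hm h)
    rw [ht _ hnm, mul_zero]
  funext k
  rw [conv_eq_sum hab, conv_eq_sum hs (conv b f)]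
  calc ∑ n ∈ s + t, conv a b n * f (k - n)
      = ∑ n ∈ s + t, ∑ m ∈ s, a m * b (n - m) * f (k - n) := by
        refine Finset.sum_congr rfl fun n _ => ?_
        rw [conv_eq_sum hs, Finset.sum_mul]
    _ = ∑ m ∈ s, ∑ n ∈ s + t, a m * b (n - m) * f (k - n) := Finset.sum_comm
    _ = ∑ m ∈ s, a m * conv b f (k - m) := by
        refine Finset.sum_congr rfl fun m hm => ?_
        rw [conv_eq_sum ht, Finset.mul_sum]
        simp_rw [mul_assoc]
        rw [← Finset.mul_sum, ← Finset.mul_sum]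
        congr 1
        have himg : (t.image (fun j => j + m)) ⊆ s + t := by
          intro n hn
          obtain ⟨j, hj, rfl⟩ := Finset.mem_image.mp hn
          simpa [add_comm] using Finset.add_mem_add hm hj
        rw [show (∑ j ∈ t, b j * f (k - m - j)) =
            ∑ n ∈ t.image (fun j => j + m), b (n - m) * f (k - n) by
          rw [Finset.sum_image (by intro x _ y _ h; exact add_right_cancel h)]
          refine Finset.sum_congr rfl fun j _ => by ring_nf
          ]
        refine (Finset.sum_subset himg fun n hn hn' => ?_).symm
        have : n - m ∉ t := fun h => hn' (Finset.mem_image.mpr ⟨n - m, h, by ring⟩)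
        rw [ht _ this, zero_mul]

lemma finSupp_convPow {a : ℤ → ℂ} (ha : FinSupp a) (N : ℕ) : FinSupp (convPow a N) := by
  induction N with
  | zero => exact finSupp_delta
  | succ n ih => exact finSupp_conv ha ih

lemma finSupp_PsiL (ws : List ℝ) (T : ℝ) : FinSupp (PsiL ws T) := by
  induction ws with
  | nil => exact finSupp_delta
  | cons w ws ih => exact finSupp_conv (finSupp_psi w T) ih


lemma key_exp (x : ℝ) : ‖Complex.exp (x * Complex.I) - 1‖ ≤ |x| := by
  have h1 : ‖Complex.exp (x * Complex.I) - 1‖ ^ 2 = 2 - 2 * Real.cos x := by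
    rw [Complex.sq_norm, Complex.normSq_apply]
    simp only [Complex.sub_re, Complex.sub_im, Complex.exp_ofReal_mul_I_re,
      Complex.exp_ofReal_mul_I_im, Complex.one_re, Complex.one_im]
    nlinarith [Real.sin_sq_add_cos_sq x]
  have h2 : 1 - x ^ 2 / 2 ≤ Real.cos x := Real.one_sub_sq_div_two_le_cos
  nlinarith [norm_nonneg (Complex.exp (x * Complex.I) - 1), abs_nonneg x, _root_.sq_abs x]

lemma int_mul_bdd {g : ℝ → ℂ} (hg : Integrable g) {e : ℝ → ℂ} (he : Continuous e)
    {C : ℝ} (hC : ∀ ξ, ‖e ξ‖ ≤ C) : Integrable fun ξ => g ξ * e ξ :=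
  (hg.bdd_mul he.aestronglyMeasurable (Filter.Eventually.of_forall fun ξ => hC ξ)).congr
    (Filter.Eventually.of_forall fun ξ => mul_comm _ _)

lemma abs_exp_I_mul (c : ℝ) (z : ℂ) (hz : z = Complex.I * c ∨ z = -(Complex.I * c)) :
    ‖Complex.exp z‖ = 1 := by
  rcases hz with h | h <;> (rw [h, Complex.norm_exp]; simp)

def mfac (T w θ : ℝ) : ℂ :=
  Complex.exp (-(Complex.I * w * T)) * Complex.exp (-(Complex.I * θ)) - 1

def mlist (ws : List ℝ) (T θ : ℝ) : ℂ := (ws.map fun w => mfac T w θ).prod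

lemma mfac_cont (T w : ℝ) : Continuous fun θ : ℝ => mfac T w θ := by
  unfold mfac
  continuity

lemma mfac_abs_le (T w θ : ℝ) : ‖mfac T w θ‖ ≤ 2 := by
  unfold mfac
  calc ‖Complex.exp (-(Complex.I * w * T)) * Complex.exp (-(Complex.I * θ)) - 1‖
      ≤ ‖Complex.exp (-(Complex.I * w * T)) * Complex.exp (-(Complex.I * θ))‖
        + ‖(1:ℂ)‖ := norm_sub_le _ 1
    _ ≤ 2 := by
        rw [norm_mul, abs_exp_I_mul (w * T) _ (by push_cast; right; ring),
          abs_exp_I_mul θ _ (by right; ring), norm_one]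
        norm_num

def RepWith {P : ℕ} (θ : Fin P → ℝ → ℝ) (f : ℤ → ℂ) (G : Fin P → ℝ → ℂ) : Prop :=
  (∀ p, Integrable (G p)) ∧
  ∀ k : ℤ, f k = ∑ p, ∫ ξ : ℝ, G p ξ * Complex.exp (Complex.I * (θ p ξ : ℂ) * (k : ℂ))

lemma RepWith.congr' {P : ℕ} {θ : Fin P → ℝ → ℝ} {f : ℤ → ℂ} {G G' : Fin P → ℝ → ℂ}
    (h : RepWith θ f G) (h2 : ∀ p ξ, G p ξ = G' p ξ) : RepWith θ f G' := by
  have : G' = G := funext fun p => funext fun ξ => (h2 p ξ).symm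
  rw [this]; exact h

lemma RepWith.conv_psi {P : ℕ} {θ : Fin P → ℝ → ℝ} (hθ : ∀ p, Continuous (θ p))
    {f : ℤ → ℂ} {G : Fin P → ℝ → ℂ} (h : RepWith θ f G) (w T : ℝ) :
    RepWith θ (conv (psi w T) f) (fun p ξ => mfac T w (θ p ξ) * G p ξ) := by
  have hmc : ∀ p : Fin P, Continuous fun ξ => mfac T w (θ p ξ) :=
    fun p => (mfac_cont T w).comp (hθ p)
  have hint : ∀ p : Fin P, Integrable fun ξ => mfac T w (θ p ξ) * G p ξ := fun p =>
    ((h.1 p).bdd_mul (hmc p).aestronglyMeasurable (Filter.Eventually.of_forall fun ξ => mfac_abs_le T w (θ p ξ)))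
  constructor
  · exact hint
  · intro k
    have hexpc : ∀ (p : Fin P) (c : ℂ), Continuous fun ξ => Complex.exp (Complex.I * (θ p ξ : ℂ) * c) := by
      intro p c
      apply Complex.continuous_exp.comp
      have := (Complex.continuous_ofReal.comp (hθ p))
      continuity
    have habs : ∀ (p : Fin P) (c : ℤ) (ξ : ℝ),
        ‖Complex.exp (Complex.I * (θ p ξ : ℂ) * (c : ℂ))‖ = 1 := by
      intro p c ξ
      rw [Complex.norm_exp]
      simp
    have hi1 : ∀ (p : Fin P) (c : ℤ),
        Integrable fun ξ => G p ξ * Complex.exp (Complex.I * (θ p ξ : ℂ) * (c : ℂ)) := by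
      intro p c
      exact int_mul_bdd (h.1 p) (hexpc p c) (C := 1) (fun ξ => le_of_eq (habs p c ξ))
    rw [conv_psi_apply, h.2 k, h.2 (k - 1), Finset.mul_sum, ← Finset.sum_sub_distrib]
    refine Finset.sum_congr rfl fun p _ => ?_
    rw [← integral_const_mul, ← integral_sub ((hi1 p (k - 1)).const_mul _) (hi1 p k)]
    refine integral_congr_ae (Filter.Eventually.of_forall fun ξ => ?_)
    simp only [mfac]
    push_cast
    rw [show Complex.I * (θ p ξ : ℂ) * ((k : ℂ) - 1)
        = -(Complex.I * (θ p ξ : ℂ)) + Complex.I * (θ p ξ : ℂ) * (k : ℂ) by ring,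
      Complex.exp_add]
    ring

lemma RepWith.conv_PsiL {P : ℕ} {θ : Fin P → ℝ → ℝ} (hθ : ∀ p, Continuous (θ p))
    {f : ℤ → ℂ} {G : Fin P → ℝ → ℂ} (h : RepWith θ f G) (ws : List ℝ) (T : ℝ) :
    RepWith θ (conv (PsiL ws T) f) (fun p ξ => mlist ws T (θ p ξ) * G p ξ) := by
  induction ws generalizing f G with
  | nil =>
      have : conv (PsiL [] T) f = f := conv_delta f
      rw [this]
      exact h.congr' (fun p ξ => by simp [mlist])
  | cons w ws ih =>
      have hstep : conv (PsiL (w :: ws) T) f = conv (psi w T) (conv (PsiL ws T) f) := by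
        show conv (conv (psi w T) (PsiL ws T)) f = _
        exact conv_assoc (finSupp_psi w T) (finSupp_PsiL ws T) f
      rw [hstep]
      exact ((ih h).conv_psi hθ w T).congr' (fun p ξ => by
        simp [mlist, mfac]; ring)

lemma RepWith.conv_convPow {P : ℕ} {θ : Fin P → ℝ → ℝ} (hθ : ∀ p, Continuous (θ p))
    {f : ℤ → ℂ} {G : Fin P → ℝ → ℂ} (h : RepWith θ f G) (ws : List ℝ) (T : ℝ) (N : ℕ) :
    RepWith θ (conv (convPow (PsiL ws T) N) f)
      (fun p ξ => (mlist ws T (θ p ξ)) ^ N * G p ξ) := by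
  induction N with
  | zero =>
      have : conv (convPow (PsiL ws T) 0) f = f := conv_delta f
      rw [this]
      exact h.congr' (fun p ξ => by simp)
  | succ n ih =>
      have hstep : conv (convPow (PsiL ws T) (n + 1)) f
          = conv (PsiL ws T) (conv (convPow (PsiL ws T) n) f) := by
        show conv (conv (PsiL ws T) (convPow (PsiL ws T) n)) f = _
        exact conv_assoc (finSupp_PsiL ws T) (finSupp_convPow (finSupp_PsiL ws T) n) f
      rw [hstep]
      exact (ih.conv_PsiL hθ ws T).congr' (fun p ξ => by ring)


lemma fourier_eq_ang (f : ℝ → ℂ) (ξ : ℝ) : 𝓕 f ξ = angFourier f (2 * Real.pi * ξ) := by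
  rw [Real.fourier_eq']
  unfold angFourier
  refine integral_congr_ae (Filter.Eventually.of_forall fun t => ?_)
  simp only [smul_eq_mul]
  congr 1
  push_cast [RCLike.inner_apply, conj_trivial]
  ring

lemma inv_formula (f : ℝ → ℂ) (hf : Integrable f) (hc : Continuous f)
    (hFi : Integrable (𝓕 f)) (t : ℝ) :
    f t = ∫ ξ : ℝ, 𝓕 f ξ * Complex.exp (Complex.I * (2 * Real.pi * ξ * t : ℝ)) := by
  conv_lhs => rw [← hc.fourierInv_fourier_eq hf hFi]
  rw [Real.fourierInv_eq']
  refine integral_congr_ae (Filter.Eventually.of_forall fun ξ => ?_)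
  simp only [smul_eq_mul]
  rw [mul_comm]
  congr 1
  push_cast [RCLike.inner_apply, conj_trivial]
  ring

lemma fourier_cont {f : ℝ → ℂ} (hf : Integrable f) : Continuous (𝓕 f) :=
  VectorFourier.fourierIntegral_continuous Real.continuous_fourierChar
    (by exact continuous_inner) hf

lemma fourier_integrable {f : ℝ → ℂ} (hf : Integrable f) {R : ℝ} (hR : 0 < R)
    (hz : ∀ ξ : ℝ, R < |ξ| → 𝓕 f ξ = 0) : Integrable (𝓕 f) := by
  refine (fourier_cont hf).integrable_of_hasCompactSupport ?_
  refine HasCompactSupport.intro (isCompact_Icc (a := -R) (b := R)) fun ξ hξ => ?_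
  refine hz ξ ?_
  simp only [Set.mem_Icc, not_and_or, not_le] at hξ
  rcases hξ with h | h
  · rw [abs_of_neg (by linarith)]; linarith
  · rw [abs_of_pos (by linarith)]; linarith

lemma mlist_bound {P : ℕ} (ω : Fin P → ℝ) {T ΩB : ℝ} (hT : 0 < T) (hΩB : 0 < ΩB)
    (p : Fin P) (ξ : ℝ) (hξ : |ξ| ≤ ΩB / (2 * Real.pi)) :
    ‖mlist (List.ofFn ω) T ((2 * Real.pi * ξ - ω p) * T)‖ ≤ ΩB * T * 2 ^ (P - 1) := by
  set θ' := (2 * Real.pi * ξ - ω p) * T with hθ'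
  have h1 : mlist (List.ofFn ω) T θ' = ∏ q : Fin P, mfac T (ω q) θ' := by
    rw [mlist, List.map_ofFn, List.prod_ofFn]
    rfl
  rw [h1, norm_prod, ← Finset.mul_prod_erase _ _ (Finset.mem_univ p)]
  have hp : ‖mfac T (ω p) θ'‖ ≤ ΩB * T := by
    have h2 : mfac T (ω p) θ' = Complex.exp ((-(2 * Real.pi * ξ * T) : ℝ) * Complex.I) - 1 := by
      unfold mfac
      rw [← Complex.exp_add]
      congr 1
      push_cast [hθ']
      ring
    rw [h2]
    refine (key_exp _).trans ?_
    have hReal.pi : (0:ℝ) < Real.pi := Real.pi_pos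
    have : |(-(2 * Real.pi * ξ * T))| = 2 * Real.pi * |ξ| * T := by
      rw [abs_neg]
      rw [abs_mul, abs_mul, abs_mul]
      rw [abs_of_pos hReal.pi, abs_of_pos hT]
      norm_num
    rw [this]
    have h3 : 2 * Real.pi * |ξ| ≤ ΩB := by
      have := mul_le_mul_of_nonneg_left hξ (le_of_lt (by positivity : (0:ℝ) < 2 * Real.pi))
      calc 2 * Real.pi * |ξ| ≤ 2 * Real.pi * (ΩB / (2 * Real.pi)) := by nlinarith
        _ = ΩB := by field_simp
    nlinarith
  have hrest : ∏ q ∈ Finset.univ.erase p, ‖mfac T (ω q) θ'‖ ≤ 2 ^ (P - 1) := by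
    calc ∏ q ∈ Finset.univ.erase p, ‖mfac T (ω q) θ'‖
        ≤ ∏ _q ∈ Finset.univ.erase p, (2:ℝ) :=
          Finset.prod_le_prod (fun q _ => norm_nonneg _) (fun q _ => mfac_abs_le T (ω q) θ')
      _ = 2 ^ (P - 1) := by
          rw [Finset.prod_const, Finset.card_erase_of_mem (Finset.mem_univ p),
            Finset.card_univ, Fintype.card_fin]
  exact mul_le_mul hp hrest (Finset.prod_nonneg fun q _ => norm_nonneg _)
    (by positivity)

/-- The decay remark following Lemma 1: under the multiband sampling condition,
the filtered amplitudes shrink to zero as the filter order grows. -/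
theorem filtered_amplitudes_decay {P : ℕ} (hP : 1 ≤ P) (ω : Fin P → ℝ)
    (hω : Function.Injective ω) (ΩB T : ℝ) (hΩB : 0 < ΩB) (hT : 0 < T)
    (hTS : T < 1 / (2 ^ P * ΩB * Real.exp 1))
    (φ : Fin P → ℝ → ℂ)
    (hcont : ∀ p, Continuous (φ p))
    (hbdd : ∀ p, ∃ M : ℝ, ∀ t : ℝ, ‖φ p t‖ ≤ M)
    (hint : ∀ p, MeasureTheory.Integrable (φ p))
    (hband : ∀ p, ∀ w : ℝ, ΩB < |w| → angFourier (φ p) w = 0)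
    (x : ℝ → ℂ)
    (hx : ∀ t : ℝ, x t = ∑ p, φ p t * Complex.exp (-(Complex.I * (ω p : ℂ) * (t : ℂ))))
    (xs : ℤ → ℂ) (hxs : ∀ k : ℤ, xs k = x (k * T)) :
    Filter.Tendsto
      (fun N : ℕ => ⨆ k : ℤ, ‖conv (convPow (PsiL (List.ofFn ω) T) N) xs k‖)
      Filter.atTop (nhds 0) := by

  classical
  have hReal.pi : (0:ℝ) < Real.pi := Real.pi_pos
  set R : ℝ := ΩB / (2 * Real.pi) with hR
  have hRpos : 0 < R := by positivity
  set θf : Fin P → ℝ → ℝ := fun p ξ => (2 * Real.pi * ξ - ω p) * T with hθf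
  have hθc : ∀ p, Continuous (θf p) := by
    intro p
    apply Continuous.mul _ continuous_const
    exact (continuous_const.mul continuous_id).sub continuous_const
  have hz : ∀ p, ∀ ξ : ℝ, R < |ξ| → 𝓕 (φ p) ξ = 0 := by
    intro p ξ h
    rw [fourier_eq_ang]
    refine hband p _ ?_
    have h2 : |2 * Real.pi * ξ| = 2 * Real.pi * |ξ| := by
      rw [abs_mul, abs_of_pos (by positivity : (0:ℝ) < 2 * Real.pi)]
    rw [h2]
    calc ΩB = 2 * Real.pi * R := by rw [hR]; field_simp
      _ < 2 * Real.pi * |ξ| := by nlinarith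
  have hFint : ∀ p, MeasureTheory.Integrable (𝓕 (φ p)) :=
    fun p => fourier_integrable (hint p) hRpos (hz p)
  -- representation of the samples
  have hrep : RepWith θf xs (fun p => 𝓕 (φ p)) := by
    refine ⟨hFint, fun k => ?_⟩
    rw [hxs k, hx]
    refine Finset.sum_congr rfl fun p _ => ?_
    rw [inv_formula (φ p) (hint p) (hcont p) (hFint p) ((k : ℝ) * T)]
    rw [← MeasureTheory.integral_mul_const]
    refine MeasureTheory.integral_congr_ae (Filter.Eventually.of_forall fun ξ => ?_)
    simp only [mul_assoc]
    congr 1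
    rw [← Complex.exp_add]
    congr 1
    push_cast [hθf]
    ring
  set Ψ : ℤ → ℂ := PsiL (List.ofFn ω) T with hΨ
  have hmain : ∀ N : ℕ, RepWith θf (conv (convPow Ψ N) xs)
      (fun p ξ => (mlist (List.ofFn ω) T (θf p ξ)) ^ N * 𝓕 (φ p) ξ) :=
    fun N => hrep.conv_convPow hθc (List.ofFn ω) T N
  set r : ℝ := ΩB * T * 2 ^ (P - 1) with hr
  have hr0 : 0 ≤ r := by positivity
  have hrlt : r < 1 := by
    have he : (2.7182818283 : ℝ) < Real.exp 1 := Real.exp_one_gt_d9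
    have h2P : (2:ℝ) ^ P = 2 ^ (P - 1) * 2 := by
      rw [← pow_succ]
      congr 1
      omega
    have hpos : (0:ℝ) < 2 ^ P * ΩB * Real.exp 1 := by positivity
    have h1 : T * (2 ^ P * ΩB * Real.exp 1) < 1 := by
      rw [lt_div_iff₀ hpos] at hTS
      exact hTS
    have h2 : (0:ℝ) < 2 ^ (P - 1) := by positivity
    have h3 : r * (2 * Real.exp 1) = T * (2 ^ P * ΩB * Real.exp 1) := by
      rw [hr, h2P]; ring
    have h4 : r * (2 * Real.exp 1) < 1 := by rw [h3]; exact h1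
    have hrpos : (0:ℝ) < r := by positivity
    nlinarith [h4, he, hrpos]
  set C : ℝ := ∑ p, ∫ ξ : ℝ, ‖𝓕 (φ p) ξ‖ with hC
  have hC0 : 0 ≤ C := Finset.sum_nonneg fun p _ =>
    MeasureTheory.integral_nonneg fun ξ => norm_nonneg _
  -- the key uniform bound
  have hbound : ∀ (N : ℕ) (k : ℤ),
      ‖conv (convPow Ψ N) xs k‖ ≤ r ^ N * C := by
    intro N k
    rw [(hmain N).2 k]
    have hterm : ∀ p : Fin P,
        ‖∫ ξ : ℝ, (fun p ξ => (mlist (List.ofFn ω) T (θf p ξ)) ^ N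
            * 𝓕 (φ p) ξ) p ξ
            * Complex.exp (Complex.I * (θf p ξ : ℂ) * (k : ℂ))‖
          ≤ r ^ N * ∫ ξ : ℝ, ‖𝓕 (φ p) ξ‖ := by
      intro p
      refine (MeasureTheory.norm_integral_le_integral_norm _).trans ?_
      rw [← MeasureTheory.integral_const_mul]
      have hInt1 : MeasureTheory.Integrable fun ξ : ℝ =>
          (mlist (List.ofFn ω) T (θf p ξ)) ^ N * 𝓕 (φ p) ξ
            * Complex.exp (Complex.I * (θf p ξ : ℂ) * (k : ℂ)) := by
        refine int_mul_bdd ((hmain N).1 p) ?_ (C := 1) (fun ξ => ?_)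
        · apply Complex.continuous_exp.comp
          exact (continuous_const.mul ((Complex.continuous_ofReal.comp (hθc p)))).mul
            continuous_const
        · rw [Complex.norm_exp]
          simp
      refine MeasureTheory.integral_mono hInt1.norm
        (((hFint p).norm.const_mul (r ^ N))) fun ξ => ?_
      simp only [norm_mul, norm_pow]
      have habse : ‖Complex.exp (Complex.I * (θf p ξ : ℂ) * (k : ℂ))‖ = 1 := by
        rw [Complex.norm_exp]
        simp
      rw [habse, mul_one]
      by_cases hcase : |ξ| ≤ R
      · have hb : ‖mlist (List.ofFn ω) T (θf p ξ)‖ ≤ r := by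
          rw [hθf]
          exact mlist_bound ω hT hΩB p ξ hcase
        exact mul_le_mul (pow_le_pow_left₀ (norm_nonneg _) hb N) le_rfl
          (norm_nonneg _) (by positivity)
      · rw [hz p ξ (lt_of_not_ge hcase)]
        simp
    calc ‖∑ p, ∫ ξ : ℝ, (fun p ξ => (mlist (List.ofFn ω) T (θf p ξ)) ^ N
            * 𝓕 (φ p) ξ) p ξ
            * Complex.exp (Complex.I * (θf p ξ : ℂ) * (k : ℂ))‖
        ≤ ∑ p, ‖∫ ξ : ℝ, (fun p ξ => (mlist (List.ofFn ω) T (θf p ξ)) ^ N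
            * 𝓕 (φ p) ξ) p ξ
            * Complex.exp (Complex.I * (θf p ξ : ℂ) * (k : ℂ))‖ := by
          exact norm_sum_le _ _
      _ ≤ ∑ p, r ^ N * ∫ ξ : ℝ, ‖𝓕 (φ p) ξ‖ :=
          Finset.sum_le_sum fun p _ => hterm p
      _ = r ^ N * C := by rw [hC, Finset.mul_sum]
  -- conclude via squeeze
  have hbdd : ∀ N : ℕ, BddAbove (Set.range fun k : ℤ =>
      ‖conv (convPow Ψ N) xs k‖) := fun N =>
    ⟨r ^ N * C, Set.forall_mem_range.mpr fun k => hbound N k⟩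
  have hsq : Filter.Tendsto (fun N : ℕ => r ^ N * C) Filter.atTop (nhds 0) := by
    have := (tendsto_pow_atTop_nhds_zero_of_lt_one hr0 hrlt).mul_const C
    simpa using this
  exact squeeze_zero (g := fun N => r ^ N * C)
    (fun N => le_trans (norm_nonneg _) (le_ciSup (hbdd N) (0 : ℤ)))
    (fun N => ciSup_le fun k => hbound N k) hsq

end
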